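/- In any bipartite graph with no isolated vertices, the size (number of vertices) of a maximum independent set equals the size (number of edges) of a minimum edge cover. -/
import Mathlib

open Finset

theorem stmt14_aux {α β : Type*} [Fintype α] [Fintype β] [DecidableEq α] [DecidableEq β]
    (G : SimpleGraph (α ⊕ β))
    (hbip₁ : ∀ a b : α, ¬ G.Adj (Sum.inl a) (Sum.inl b))
    (hbip₂ : ∀ a b : β, ¬ G.Adj (Sum.inr a) (Sum.inr b))
    (hnoiso : ∀ v : α ⊕ β, ∃ w, G.Adj v w) :
    ∃ (s : Finset (α ⊕ β)) (c : Finset (Sym2 (α ⊕ β))),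
      (∀ v ∈ s, ∀ w ∈ s, ¬ G.Adj v w) ∧ (↑c ⊆ G.edgeSet) ∧
      (∀ v : α ⊕ β, ∃ e ∈ c, v ∈ e) ∧ c.card ≤ s.card := by
  classical
  rcases isEmpty_or_nonempty (α ⊕ β) with hE | hNE
  · exact ⟨∅, ∅, by simp, by simp, fun v => (hE.false v).elim, le_rfl⟩
  -- the neighborhood function
  set t : α → Finset β := fun a => univ.filter (fun b => G.Adj (Sum.inl a) (Sum.inr b)) with ht
  have htmem : ∀ a b, b ∈ t a ↔ G.Adj (Sum.inl a) (Sum.inr b) := by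
    intro a b; simp [ht]
  -- the maximal deficiency
  set d : ℕ := univ.sup (fun s : Finset α => s.card - (s.biUnion t).card) with hd
  have hdle : ∀ s : Finset α, s.card ≤ (s.biUnion t).card + d := by
    intro s
    have h : s.card - (s.biUnion t).card ≤ d := by
      rw [hd]
      exact Finset.le_sup (f := fun s : Finset α => s.card - (s.biUnion t).card)
        (Finset.mem_univ s)
    omega
  -- an independent set maximizing the value |s| + |B \ N(s)|
  set val : Finset α → ℕ := fun s => s.card + (univ \ s.biUnion t).card with hval
  obtain ⟨S, -, hSmax⟩ := Finset.exists_max_image (univ : Finset (Finset α)) val ⟨∅, Finset.mem_univ _⟩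
  have hSmax' : ∀ s : Finset α, val s ≤ val S := fun s => hSmax s (Finset.mem_univ s)
  have hvalS : Fintype.card β + d ≤ val S := by
    obtain ⟨s₀, -, hs₀⟩ := Finset.exists_mem_eq_sup (univ : Finset (Finset α))
      ⟨∅, Finset.mem_univ _⟩ (fun s : Finset α => s.card - (s.biUnion t).card)
    have h1 : (s₀.biUnion t).card ≤ Fintype.card β := by
      simpa using Finset.card_le_card (Finset.subset_univ (s₀.biUnion t))
    have h2 : val s₀ = s₀.card + (Fintype.card β - (s₀.biUnion t).card) := by
      simp [hval, Finset.card_sdiff_of_subset (Finset.subset_univ _)]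
    have hd0 : d = s₀.card - (s₀.biUnion t).card := hs₀
    rcases Nat.eq_zero_or_pos d with h0 | hpos
    · have hx := hSmax' ∅
      have hy : val ∅ = Fintype.card β := by simp [hval]
      omega
    · have hx := hSmax' s₀
      omega
  -- the independent set
  set I : Finset (α ⊕ β) := S.image Sum.inl ∪ (univ \ S.biUnion t).image Sum.inr with hI
  have hIcard : I.card = val S := by
    rw [hI, Finset.card_union_of_disjoint, Finset.card_image_of_injective _ Sum.inl_injective,
      Finset.card_image_of_injective _ Sum.inr_injective]
    refine Finset.disjoint_left.2 ?_
    rintro x hx hx'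
    obtain ⟨a, -, rfl⟩ := Finset.mem_image.1 hx
    obtain ⟨b, -, hb⟩ := Finset.mem_image.1 hx'
    exact absurd hb (by simp)
  have hindep : ∀ v ∈ I, ∀ w ∈ I, ¬ G.Adj v w := by
    intro v hv w hw hadj
    rw [hI, Finset.mem_union] at hv hw
    rcases hv with hv | hv <;> rcases hw with hw | hw
    · obtain ⟨a, -, rfl⟩ := Finset.mem_image.1 hv
      obtain ⟨b, -, rfl⟩ := Finset.mem_image.1 hw
      exact hbip₁ a b hadj
    · obtain ⟨a, ha, rfl⟩ := Finset.mem_image.1 hv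
      obtain ⟨b, hb, rfl⟩ := Finset.mem_image.1 hw
      rw [Finset.mem_sdiff] at hb
      exact hb.2 (Finset.mem_biUnion.2 ⟨a, ha, (htmem a b).2 hadj⟩)
    · obtain ⟨b, hb, rfl⟩ := Finset.mem_image.1 hv
      obtain ⟨a, ha, rfl⟩ := Finset.mem_image.1 hw
      rw [Finset.mem_sdiff] at hb
      exact hb.2 (Finset.mem_biUnion.2 ⟨a, ha, (htmem a b).2 hadj.symm⟩)
    · obtain ⟨a, -, rfl⟩ := Finset.mem_image.1 hv
      obtain ⟨b, -, rfl⟩ := Finset.mem_image.1 hw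
      exact hbip₂ a b hadj
  -- Hall's theorem with d dummy vertices
  set t' : α → Finset (β ⊕ Fin d) :=
    fun a => (t a).image Sum.inl ∪ (univ : Finset (Fin d)).image Sum.inr with ht'
  have hall : ∀ s : Finset α, s.card ≤ (s.biUnion t').card := by
    intro s
    rcases s.eq_empty_or_nonempty with rfl | hs
    · simp
    · have hsub : (s.biUnion t).image Sum.inl ∪ (univ : Finset (Fin d)).image Sum.inr
          ⊆ s.biUnion t' := by
        intro x hx
        rcases Finset.mem_union.1 hx with hx | hx
        · obtain ⟨b, hb, rfl⟩ := Finset.mem_image.1 hx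
          obtain ⟨a, ha, hba⟩ := Finset.mem_biUnion.1 hb
          exact Finset.mem_biUnion.2
            ⟨a, ha, Finset.mem_union_left _ (Finset.mem_image_of_mem _ hba)⟩
        · obtain ⟨a0, ha0⟩ := hs
          exact Finset.mem_biUnion.2 ⟨a0, ha0, Finset.mem_union_right _ hx⟩
      have hcard : ((s.biUnion t).image Sum.inl ∪
          (univ : Finset (Fin d)).image Sum.inr).card = (s.biUnion t).card + d := by
        rw [Finset.card_union_of_disjoint, Finset.card_image_of_injective _ Sum.inl_injective,
          Finset.card_image_of_injective _ Sum.inr_injective, Finset.card_univ, Fintype.card_fin]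
        refine Finset.disjoint_left.2 ?_
        rintro x hx hx'
        obtain ⟨b, -, rfl⟩ := Finset.mem_image.1 hx
        obtain ⟨j, -, hj⟩ := Finset.mem_image.1 hx'
        exact absurd hj (by simp)
      calc s.card ≤ (s.biUnion t).card + d := hdle s
        _ = _ := hcard.symm
        _ ≤ (s.biUnion t').card := Finset.card_le_card hsub
  obtain ⟨f, hfinj, hft⟩ := (Finset.all_card_le_biUnion_card_iff_exists_injective t').1 hall
  set emb : β ⊕ Fin d → α ⊕ β := Sum.elim Sum.inr (fun _ => Classical.arbitrary (α ⊕ β)) with hemb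
  set A₀ : Finset α := univ.filter (fun a => ∃ b, f a = Sum.inl b) with hA₀
  have hsumr : ∀ a ∈ A₀, ∃ b, f a = Sum.inl b ∧ emb (f a) = Sum.inr b := by
    intro a ha
    obtain ⟨b, hb⟩ := (Finset.mem_filter.1 ha).2
    exact ⟨b, hb, by rw [hb]; simp [hemb]⟩
  have hMadj : ∀ a ∈ A₀, G.Adj (Sum.inl a) (emb (f a)) := by
    intro a ha
    obtain ⟨b, hb1, hb2⟩ := hsumr a ha
    have hfa := hft a
    rw [hb1] at hfa
    rcases Finset.mem_union.1 hfa with h | h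
    · obtain ⟨b', hb', hbb⟩ := Finset.mem_image.1 h
      have hbe : b' = b := Sum.inl_injective hbb
      subst hbe
      rw [hb2]
      exact (htmem a b').1 hb'
    · obtain ⟨j, -, hj⟩ := Finset.mem_image.1 h
      exact absurd hj (by simp)
  set me : α → Sym2 (α ⊕ β) := fun a => s(Sum.inl a, emb (f a)) with hme
  have hmeinj : Set.InjOn me A₀ := by
    intro a ha a' ha' h
    obtain ⟨b, -, hb2⟩ := hsumr a (Finset.mem_coe.1 ha)
    obtain ⟨b', -, hb2'⟩ := hsumr a' (Finset.mem_coe.1 ha')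
    rw [hme] at h
    simp only [Sym2.eq_iff] at h
    rcases h with ⟨h1, -⟩ | ⟨h1, -⟩
    · exact Sum.inl_injective h1
    · rw [hb2'] at h1
      exact absurd h1 (by simp)
  set V₀ : Finset (α ⊕ β) := A₀.image Sum.inl ∪ A₀.image (fun a => emb (f a)) with hV₀
  have hV₀card : V₀.card = A₀.card + A₀.card := by
    rw [hV₀, Finset.card_union_of_disjoint, Finset.card_image_of_injective _ Sum.inl_injective,
      Finset.card_image_of_injOn]
    · intro a ha a' ha' h
      obtain ⟨b, hb1, hb2⟩ := hsumr a (Finset.mem_coe.1 ha)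
      obtain ⟨b', hb1', hb2'⟩ := hsumr a' (Finset.mem_coe.1 ha')
      simp only at h
      rw [hb2, hb2'] at h
      apply hfinj
      rw [hb1, hb1', Sum.inr_injective h]
    · refine Finset.disjoint_left.2 ?_
      rintro x hx hx'
      obtain ⟨a, -, rfl⟩ := Finset.mem_image.1 hx
      obtain ⟨a', ha', h⟩ := Finset.mem_image.1 hx'
      obtain ⟨b, -, hb2⟩ := hsumr a' ha'
      rw [hb2] at h
      exact absurd h (by simp)
  have hA₀le : A₀.card ≤ Fintype.card α := by
    simpa using Finset.card_le_card (Finset.subset_univ A₀)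
  have hA₀compl : Fintype.card α ≤ A₀.card + d := by
    have hinj2 : Set.InjOn f (univ \ A₀ : Finset α) := fun x _ y _ h => hfinj h
    have hmaps : ∀ a ∈ (univ \ A₀ : Finset α), f a ∈ (univ : Finset (Fin d)).image Sum.inr := by
      intro a ha
      rw [Finset.mem_sdiff] at ha
      have ha2 : ¬ ∃ b, f a = Sum.inl b := by
        intro hb
        exact ha.2 (by rw [hA₀]; exact Finset.mem_filter.2 ⟨Finset.mem_univ a, hb⟩)
      rcases h : f a with b | j
      · exact absurd ⟨b, h⟩ ha2
      · exact Finset.mem_image.2 ⟨j, Finset.mem_univ _, rfl⟩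
    have hle := Finset.card_le_card_of_injOn f hmaps hinj2
    have h2 : ((univ : Finset (Fin d)).image (Sum.inr : Fin d → β ⊕ Fin d)).card = d := by
      rw [Finset.card_image_of_injective _ Sum.inr_injective, Finset.card_univ, Fintype.card_fin]
    have h3 : (univ \ A₀ : Finset α).card = Fintype.card α - A₀.card := by
      rw [Finset.card_sdiff_of_subset (Finset.subset_univ _), Finset.card_univ]
    omega
  -- the edge cover
  set ec : (α ⊕ β) → Sym2 (α ⊕ β) := fun v => s(v, (hnoiso v).choose) with hec
  have hecmem : ∀ v, v ∈ ec v := by intro v; simp [hec]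
  have hecedge : ∀ v, ec v ∈ G.edgeSet := by
    intro v
    simp only [hec]
    exact (G.mem_edgeSet).mpr (hnoiso v).choose_spec
  set U : Finset (α ⊕ β) := univ \ V₀ with hU
  set C : Finset (Sym2 (α ⊕ β)) := A₀.image me ∪ U.image ec with hC
  have hCedge : ↑C ⊆ G.edgeSet := by
    intro e he
    rw [Finset.mem_coe, hC, Finset.mem_union] at he
    rcases he with he | he
    · obtain ⟨a, ha, rfl⟩ := Finset.mem_image.1 he
      simp only [hme]
      exact (G.mem_edgeSet).mpr (hMadj a ha)
    · obtain ⟨v, -, rfl⟩ := Finset.mem_image.1 he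
      exact hecedge v
  have hCcover : ∀ v : α ⊕ β, ∃ e ∈ C, v ∈ e := by
    intro v
    by_cases hv : v ∈ V₀
    · rw [hV₀, Finset.mem_union] at hv
      rcases hv with hv | hv
      · obtain ⟨a, ha, rfl⟩ := Finset.mem_image.1 hv
        exact ⟨me a, by rw [hC]; exact Finset.mem_union_left _ (Finset.mem_image_of_mem _ ha),
          by simp [hme]⟩
      · obtain ⟨a, ha, rfl⟩ := Finset.mem_image.1 hv
        exact ⟨me a, by rw [hC]; exact Finset.mem_union_left _ (Finset.mem_image_of_mem _ ha),
          by simp [hme]⟩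
    · refine ⟨ec v, ?_, hecmem v⟩
      rw [hC]
      exact Finset.mem_union_right _ (Finset.mem_image_of_mem _
        (by rw [hU]; exact Finset.mem_sdiff.2 ⟨Finset.mem_univ v, hv⟩))
  have hCcard : C.card ≤ Fintype.card α + Fintype.card β - A₀.card := by
    have h1 : C.card ≤ A₀.card + U.card := by
      refine le_trans (Finset.card_union_le _ _) ?_
      exact Nat.add_le_add (le_of_eq (Finset.card_image_of_injOn hmeinj)) Finset.card_image_le
    have hUcard : U.card = Fintype.card α + Fintype.card β - V₀.card := by
      rw [hU, Finset.card_sdiff_of_subset (Finset.subset_univ _), Finset.card_univ, Fintype.card_sum]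
    have hV₀le : V₀.card ≤ Fintype.card α + Fintype.card β := by
      have h5 := Finset.card_le_card (Finset.subset_univ V₀)
      rw [Finset.card_univ, Fintype.card_sum] at h5
      exact h5
    omega
  exact ⟨I, C, hindep, hCedge, hCcover, by omega⟩

theorem stmt_14 {α β : Type*} [Fintype α] [Fintype β] [DecidableEq α] [DecidableEq β]
    (G : SimpleGraph (α ⊕ β))
    (hbip₁ : ∀ a b : α, ¬ G.Adj (Sum.inl a) (Sum.inl b))
    (hbip₂ : ∀ a b : β, ¬ G.Adj (Sum.inr a) (Sum.inr b))
    (hnoiso : ∀ v : α ⊕ β, ∃ w, G.Adj v w) :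
    sSup {k : ℕ | ∃ s : Finset (α ⊕ β),
        (∀ v ∈ s, ∀ w ∈ s, ¬ G.Adj v w) ∧ s.card = k} =
    sInf {k : ℕ | ∃ c : Finset (Sym2 (α ⊕ β)), ↑c ⊆ G.edgeSet ∧
        (∀ v : α ⊕ β, ∃ e ∈ c, v ∈ e) ∧ c.card = k} := by
  classical
  obtain ⟨s₀, c₀, hs₀, hc₀e, hc₀cov, hle⟩ := stmt14_aux G hbip₁ hbip₂ hnoiso
  have hcard_le : ∀ (s : Finset (α ⊕ β)) (c : Finset (Sym2 (α ⊕ β))),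
      (∀ v ∈ s, ∀ w ∈ s, ¬ G.Adj v w) → ↑c ⊆ G.edgeSet →
      (∀ v : α ⊕ β, ∃ e ∈ c, v ∈ e) → s.card ≤ c.card := by
    intro s c hs hce hcov
    refine Finset.card_le_card_of_injOn (fun v => (hcov v).choose)
      (fun v _ => (hcov v).choose_spec.1) ?_
    intro v hv w hw h
    by_contra hne
    have hvmem : v ∈ (hcov v).choose := (hcov v).choose_spec.2
    have hwmem : w ∈ (hcov v).choose := by
      simp only at h
      rw [h]; exact (hcov w).choose_spec.2
    have hemem : (hcov v).choose ∈ G.edgeSet := hce (hcov v).choose_spec.1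
    have heq : (hcov v).choose = s(v, w) := (Sym2.mem_and_mem_iff hne).1 ⟨hvmem, hwmem⟩
    rw [heq, SimpleGraph.mem_edgeSet] at hemem
    exact hs v (Finset.mem_coe.1 hv) w (Finset.mem_coe.1 hw) hemem
  apply le_antisymm
  · refine csSup_le ⟨0, ∅, by simp⟩ ?_
    rintro k ⟨s, hs, rfl⟩
    refine le_csInf ⟨c₀.card, c₀, hc₀e, hc₀cov, rfl⟩ ?_
    rintro m ⟨c, hce, hcov, rfl⟩
    exact hcard_le s c hs hce hcov
  · have hbdd : BddAbove {k : ℕ | ∃ s : Finset (α ⊕ β),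
        (∀ v ∈ s, ∀ w ∈ s, ¬ G.Adj v w) ∧ s.card = k} := by
      refine ⟨Fintype.card (α ⊕ β), ?_⟩
      rintro k ⟨s, -, rfl⟩
      exact (Finset.card_le_univ s).trans_eq Finset.card_univ
    have h1 : sInf {k : ℕ | ∃ c : Finset (Sym2 (α ⊕ β)), ↑c ⊆ G.edgeSet ∧
        (∀ v : α ⊕ β, ∃ e ∈ c, v ∈ e) ∧ c.card = k} ≤ c₀.card :=
      Nat.sInf_le ⟨c₀, hc₀e, hc₀cov, rfl⟩
    have h2 : s₀.card ≤ sSup {k : ℕ | ∃ s : Finset (α ⊕ β),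
        (∀ v ∈ s, ∀ w ∈ s, ¬ G.Adj v w) ∧ s.card = k} :=
      le_csSup hbdd ⟨s₀, hs₀, rfl⟩
    exact h1.trans (hle.trans h2)
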